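/- Let S1 and S2 be complete separable metric spaces, ν a Borel probability measure on S2, and S ⊆ P_ν(S1×S2) a set of joint distributions whose S2-marginal is ν. Then the following are equivalent: (a) S is nonempty and pointwise uniqueness holds (i.e., whenever X1, X2, Y are defined on a common probability space with both joint laws μ_{X1,Y} and μ_{X2,Y} in S, then X1 = X2 a.s.); (b) there exists a strong solution (some μ ∈ S of the form μ(dx×dy) = δ_{F(y)}(dx) ν(dy) for a Borel measurable F : S2 → S1) and S contains at most one measure. -/
import Mathlib

open MeasureTheory ProbabilityTheory Set

section Aux

variable {S1 S2 : Type} [MeasurableSpace S1] [TopologicalSpace S1] [PolishSpace S1] [BorelSpace S1]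
    [MeasurableSpace S2] [TopologicalSpace S2] [PolishSpace S2] [BorelSpace S2]

lemma aux_diag_measurable : MeasurableSet {p : S1 × S1 | p.1 = p.2} :=
  (isClosed_eq continuous_fst continuous_snd).measurableSet

lemma aux_exists_dirac (m : Measure S1) [IsProbabilityMeasure m]
    (h : (m.prod m) {p : S1 × S1 | p.1 ≠ p.2} = 0) : ∃ a, m = Measure.dirac a := by
  have hdiag : MeasurableSet {p : S1 × S1 | p.1 = p.2} := aux_diag_measurable
  have h1 : (m.prod m) {p : S1 × S1 | p.1 = p.2} = 1 := by
    have := measure_add_measure_compl (μ := m.prod m) hdiag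
    have hc : {p : S1 × S1 | p.1 = p.2}ᶜ = {p : S1 × S1 | p.1 ≠ p.2} := rfl
    rw [hc, h, add_zero, measure_univ] at this
    exact this
  rw [Measure.prod_apply hdiag] at h1
  have hpre : ∀ x : S1, (Prod.mk x ⁻¹' {p : S1 × S1 | p.1 = p.2}) = {x} := by
    intro x; ext y; simp [eq_comm]
  simp_rw [hpre] at h1
  -- f x = m {x} is measurable
  have hf : Measurable fun x : S1 => m {x} := by
    have := measurable_measure_prodMk_left (ν := m) hdiag
    simpa [hpre] using this
  have hle : ∀ x : S1, m {x} ≤ 1 := fun x => prob_le_one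
  have h0 : ∫⁻ x, (1 - m {x}) ∂m = 0 := by
    rw [lintegral_sub hf (by simp [h1]) (Filter.Eventually.of_forall hle)]
    simp [h1]
  have hae : ∀ᵐ x ∂m, (1 : ENNReal) - m {x} = 0 :=
    (lintegral_eq_zero_iff (Measurable.const_sub hf 1)).mp h0
  have hae2 : ∀ᵐ x ∂m, m {x} = 1 := by
    filter_upwards [hae] with x hx
    have : (1:ENNReal) ≤ m {x} := tsub_eq_zero_iff_le.mp hx
    exact le_antisymm prob_le_one this
  obtain ⟨a, ha⟩ : ∃ a : S1, m {a} = 1 := hae2.exists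
  refine ⟨a, ?_⟩
  ext s hs
  by_cases has : a ∈ s
  · have h1' : m s = 1 := by
      refine le_antisymm prob_le_one ?_
      calc (1:ENNReal) = m {a} := ha.symm
        _ ≤ m s := measure_mono (singleton_subset_iff.mpr has)
    rw [h1', Measure.dirac_apply' a hs, indicator_of_mem has]; rfl
  · have hcompl : m {a}ᶜ = 0 :=
      (prob_compl_eq_zero_iff (measurableSet_singleton a)).mpr ha
    have h0' : m s = 0 :=
      measure_mono_null (fun x hx (hxa : x ∈ ({a} : Set S1)) => has (by
        rw [mem_singleton_iff] at hxa; exact hxa ▸ hx)) hcompl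
    rw [h0', Measure.dirac_apply' a hs, indicator_of_notMem has]

end Aux

section Aux2

variable {S1 S2 : Type} [MeasurableSpace S1] [TopologicalSpace S1] [PolishSpace S1] [BorelSpace S1]
    [MeasurableSpace S2] [TopologicalSpace S2] [PolishSpace S2] [BorelSpace S2]

lemma aux_map_fst (ν : Measure S2) [IsProbabilityMeasure ν]
    (κ₁ κ₂ : Kernel S2 S1) [IsMarkovKernel κ₁] [IsMarkovKernel κ₂] :
    (ν ⊗ₘ (κ₁ ×ₖ κ₂)).map (fun p => (p.2.1, p.1)) = (ν ⊗ₘ κ₁).map Prod.swap := by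
  have hf : Measurable fun p : S2 × S1 × S1 => (p.2.1, p.1) :=
    (measurable_snd.fst).prodMk measurable_fst
  ext s hs
  rw [Measure.map_apply hf hs, Measure.map_apply measurable_swap hs,
    Measure.compProd_apply (hf hs), Measure.compProd_apply (measurable_swap hs)]
  refine lintegral_congr fun y => ?_
  have h1 : (Prod.mk y ⁻¹' ((fun p : S2 × S1 × S1 => (p.2.1, p.1)) ⁻¹' s))
      = ((fun x : S1 => (x, y)) ⁻¹' s) ×ˢ (univ : Set S1) := by
    ext q; simp [Set.mem_prod]
  rw [h1, Kernel.prod_apply, Measure.prod_prod, measure_univ, mul_one]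
  rfl

lemma aux_map_snd (ν : Measure S2) [IsProbabilityMeasure ν]
    (κ₁ κ₂ : Kernel S2 S1) [IsMarkovKernel κ₁] [IsMarkovKernel κ₂] :
    (ν ⊗ₘ (κ₁ ×ₖ κ₂)).map (fun p => (p.2.2, p.1)) = (ν ⊗ₘ κ₂).map Prod.swap := by
  have hf : Measurable fun p : S2 × S1 × S1 => (p.2.2, p.1) :=
    (measurable_snd.snd).prodMk measurable_fst
  ext s hs
  rw [Measure.map_apply hf hs, Measure.map_apply measurable_swap hs,
    Measure.compProd_apply (hf hs), Measure.compProd_apply (measurable_swap hs)]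
  refine lintegral_congr fun y => ?_
  have h1 : (Prod.mk y ⁻¹' ((fun p : S2 × S1 × S1 => (p.2.2, p.1)) ⁻¹' s))
      = (univ : Set S1) ×ˢ ((fun x : S1 => (x, y)) ⁻¹' s) := by
    ext q; simp [Set.mem_prod]
  rw [h1, Kernel.prod_apply, Measure.prod_prod, measure_univ, one_mul]
  rfl

end Aux2

/-- Generalized Yamada-Watanabe / Engelbert theorem (Kurtz, Theorem 1.5):
weak existence plus pointwise uniqueness is equivalent to existence of a strong
solution plus joint uniqueness in law. -/
theorem stmt0
    {S1 S2 : Type} [MeasurableSpace S1] [TopologicalSpace S1] [PolishSpace S1] [BorelSpace S1]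
    [MeasurableSpace S2] [TopologicalSpace S2] [PolishSpace S2] [BorelSpace S2]
    (ν : Measure S2) [IsProbabilityMeasure ν]
    (S : Set (Measure (S1 × S2)))
    (hS : ∀ μ ∈ S, IsProbabilityMeasure μ ∧ μ.map Prod.snd = ν) :
    (S.Nonempty ∧
      ∀ (Ω : Type) (mΩ : MeasurableSpace Ω) (P : Measure Ω), IsProbabilityMeasure P →
        ∀ (X1 X2 : Ω → S1) (Y : Ω → S2), Measurable X1 → Measurable X2 → Measurable Y →
          P.map (fun ω => (X1 ω, Y ω)) ∈ S → P.map (fun ω => (X2 ω, Y ω)) ∈ S →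
          X1 =ᵐ[P] X2)
    ↔ ((∃ F : S2 → S1, Measurable F ∧ ν.map (fun y => (F y, y)) ∈ S) ∧ S.Subsingleton) := by
  have hswap : ∀ (μ : Measure (S1 × S2)), (μ.map Prod.swap).map Prod.swap = μ := fun μ => by
    rw [Measure.map_map measurable_swap measurable_swap]
    simp [Function.comp_def]
  constructor
  · rintro ⟨⟨μ0, hμ0⟩, hpu⟩
    haveI hP0 : IsProbabilityMeasure μ0 := (hS μ0 hμ0).1
    have hne1 : Nonempty S1 := by
      by_contra hne
      rw [not_nonempty_iff] at hne
      have hu : (univ : Set (S1 × S2)) = ∅ := univ_eq_empty_iff.mpr (by infer_instance)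
      have h1 := measure_univ (μ := μ0)
      rw [hu, measure_empty] at h1
      exact one_ne_zero h1.symm
    -- conditional kernels
    have hker : ∀ μ ∈ S, ∃ κ : Kernel S2 S1, IsMarkovKernel κ ∧ ν ⊗ₘ κ = μ.map Prod.swap := by
      intro μ hμ
      haveI := (hS μ hμ).1
      haveI : IsProbabilityMeasure (μ.map Prod.swap) :=
        Measure.isProbabilityMeasure_map measurable_swap.aemeasurable
      refine ⟨(μ.map Prod.swap).condKernel, inferInstance, ?_⟩
      have hfst : (μ.map Prod.swap).fst = ν := by
        rw [Measure.fst, Measure.map_map measurable_fst measurable_swap]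
        have h : (Prod.fst ∘ Prod.swap : S1 × S2 → S2) = Prod.snd := rfl
        rw [h]
        exact (hS μ hμ).2
      rw [← hfst]
      exact (μ.map Prod.swap).disintegrate _
    -- coupling
    have couple : ∀ μ1 ∈ S, ∀ μ2 ∈ S, ∀ (κ1 κ2 : Kernel S2 S1),
        IsMarkovKernel κ1 → IsMarkovKernel κ2 →
        ν ⊗ₘ κ1 = μ1.map Prod.swap → ν ⊗ₘ κ2 = μ2.map Prod.swap →
        ((fun ω : S2 × S1 × S1 => ω.2.1) =ᵐ[ν ⊗ₘ (κ1 ×ₖ κ2)] fun ω => ω.2.2) := by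
      intro μ1 h1 μ2 h2 κ1 κ2 hm1 hm2 hk1 hk2
      haveI := hm1; haveI := hm2
      haveI := (hS μ1 h1).1; haveI := (hS μ2 h2).1
      refine hpu (S2 × S1 × S1) inferInstance (ν ⊗ₘ (κ1 ×ₖ κ2)) inferInstance
        (fun ω => ω.2.1) (fun ω => ω.2.2) Prod.fst
        measurable_snd.fst measurable_snd.snd measurable_fst ?_ ?_
      · have e1 : (ν ⊗ₘ (κ1 ×ₖ κ2)).map (fun p : S2 × S1 × S1 => (p.2.1, p.1)) = μ1 := by
          rw [aux_map_fst ν κ1 κ2, hk1, hswap]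
        show (ν ⊗ₘ (κ1 ×ₖ κ2)).map (fun p : S2 × S1 × S1 => (p.2.1, p.1)) ∈ S
        rw [e1]; exact h1
      · have e2 : (ν ⊗ₘ (κ1 ×ₖ κ2)).map (fun p : S2 × S1 × S1 => (p.2.2, p.1)) = μ2 := by
          rw [aux_map_snd ν κ1 κ2, hk2, hswap]
        show (ν ⊗ₘ (κ1 ×ₖ κ2)).map (fun p : S2 × S1 × S1 => (p.2.2, p.1)) ∈ S
        rw [e2]; exact h2
    have hsub : S.Subsingleton := by
      intro μ1 h1 μ2 h2
      obtain ⟨κ1, hm1, hk1⟩ := hker μ1 h1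
      obtain ⟨κ2, hm2, hk2⟩ := hker μ2 h2
      haveI := hm1; haveI := hm2
      have hae := couple μ1 h1 μ2 h2 κ1 κ2 hm1 hm2 hk1 hk2
      have e1 : (ν ⊗ₘ (κ1 ×ₖ κ2)).map (fun p : S2 × S1 × S1 => (p.2.1, p.1)) = μ1 := by
        rw [aux_map_fst ν κ1 κ2, hk1, hswap]
      have e2 : (ν ⊗ₘ (κ1 ×ₖ κ2)).map (fun p : S2 × S1 × S1 => (p.2.2, p.1)) = μ2 := by
        rw [aux_map_snd ν κ1 κ2, hk2, hswap]
      rw [← e1, ← e2]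
      refine Measure.map_congr ?_
      filter_upwards [hae] with ω hω
      rw [show ω.2.1 = ω.2.2 from hω]
    refine ⟨?_, hsub⟩
    -- strong solution
    obtain ⟨κ, hκm, hκ⟩ := hker μ0 hμ0
    haveI := hκm
    have hae := couple μ0 hμ0 μ0 hμ0 κ κ hκm hκm hκ hκ
    have hset' : MeasurableSet {p : S1 × S1 | p.1 ≠ p.2} :=
      (aux_diag_measurable (S1 := S1)).compl
    have hset : MeasurableSet {ω : S2 × S1 × S1 | ω.2.1 ≠ ω.2.2} :=
      hset'.preimage measurable_snd
    have hnull : (ν ⊗ₘ (κ ×ₖ κ)) {ω : S2 × S1 × S1 | ω.2.1 ≠ ω.2.2} = 0 := by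
      rw [Filter.EventuallyEq, ae_iff] at hae
      exact hae
    rw [Measure.compProd_apply hset] at hnull
    have hnull' : ∫⁻ y, (κ ×ₖ κ) y {p : S1 × S1 | p.1 ≠ p.2} ∂ν = 0 := hnull
    have haeD : ∀ᵐ y ∂ν, (κ y).prod (κ y) {p : S1 × S1 | p.1 ≠ p.2} = 0 := by
      have h := (lintegral_eq_zero_iff (Kernel.measurable_coe (κ ×ₖ κ) hset')).mp hnull'
      filter_upwards [h] with y hy
      rw [← Kernel.prod_apply]
      exact hy
    have haeDirac : ∀ᵐ y ∂ν, ∃ a, κ y = Measure.dirac a := by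
      filter_upwards [haeD] with y hy
      exact aux_exists_dirac (κ y) hy
    obtain ⟨e, he⟩ := MeasureTheory.exists_measurableEmbedding_real S1
    set e' : S1 → ℝ := fun x => Real.arctan (e x) + 2 with he'def
    have he'm : Measurable e' := (Real.continuous_arctan.measurable.comp he.measurable).add_const 2
    have he'pos : ∀ x, 0 ≤ e' x := by
      intro x
      have h1 := Real.neg_pi_div_two_lt_arctan (e x)
      have h2 := Real.pi_le_four
      simp only [he'def]
      linarith
    have he'i : Function.Injective e' := by
      intro a b hab
      simp only [he'def] at hab
      exact he.injective (Real.arctan_injective (by linarith))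
    have he'emb : MeasurableEmbedding e' := he'm.measurableEmbedding he'i
    obtain ⟨r, hrm, hre⟩ := he'emb.exists_measurable_extend measurable_id (fun _ => hne1)
    set g : S2 → ℝ := fun y => (∫⁻ x, ENNReal.ofReal (e' x) ∂κ y).toReal with hgdef
    have hgm : Measurable g :=
      (Measurable.lintegral_kernel (he'm.ennreal_ofReal)).ennreal_toReal
    set F : S2 → S1 := fun y => r (g y) with hFdef
    have hFm : Measurable F := hrm.comp hgm
    have haeF : ∀ᵐ y ∂ν, κ y = Measure.dirac (F y) := by
      filter_upwards [haeDirac] with y hy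
      obtain ⟨a, ha⟩ := hy
      have hg : g y = e' a := by
        simp only [hgdef, ha, lintegral_dirac]
        exact ENNReal.toReal_ofReal (he'pos a)
      have hFa : F y = a := by
        simp only [hFdef, hg]
        exact congrFun hre a
      rw [ha, hFa]
    have hmF : Measurable fun y : S2 => (y, F y) := measurable_id.prodMk hFm
    have hfinal : ν.map (fun y => (y, F y)) = ν ⊗ₘ κ := by
      ext s hs
      rw [Measure.map_apply hmF hs, Measure.compProd_apply hs]
      have hcongr : ∀ᵐ y ∂ν, κ y (Prod.mk y ⁻¹' s)
          = Set.indicator ((fun y => (y, F y)) ⁻¹' s) 1 y := by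
        filter_upwards [haeF] with y hy
        rw [hy, Measure.dirac_apply' _ (hs.preimage measurable_prodMk_left)]
        by_cases hmem : (y, F y) ∈ s
        · rw [indicator_of_mem (by exact hmem) (1 : S1 → ENNReal),
            indicator_of_mem (by exact hmem) (1 : S2 → ENNReal)]
          rfl
        · rw [indicator_of_notMem (by exact hmem) (1 : S1 → ENNReal),
            indicator_of_notMem (by exact hmem) (1 : S2 → ENNReal)]
      rw [lintegral_congr_ae hcongr,
        lintegral_indicator_one (hs.preimage hmF)]
    refine ⟨F, hFm, ?_⟩
    have heq : ν.map (fun y => (F y, y)) = μ0 := by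
      have h2 : (ν.map (fun y => (y, F y))).map Prod.swap = ν.map (fun y => (F y, y)) := by
        rw [Measure.map_map measurable_swap hmF]
        rfl
      rw [← h2, hfinal, hκ, hswap]
    rw [heq]; exact hμ0
  · rintro ⟨⟨F, hFm, hFS⟩, hsub⟩
    refine ⟨⟨_, hFS⟩, ?_⟩
    intro Ω mΩ P hP X1 X2 Y hX1 hX2 hY h1 h2
    haveI := hP
    have hset : MeasurableSet {p : S1 × S2 | p.1 = F p.2} :=
      (aux_diag_measurable (S1 := S1)).preimage (measurable_fst.prodMk (hFm.comp measurable_snd))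
    have hmF2 : Measurable fun y : S2 => (F y, y) := hFm.prodMk measurable_id
    have key : ∀ (X : Ω → S1), Measurable X → P.map (fun ω => (X ω, Y ω)) ∈ S →
        ∀ᵐ ω ∂P, X ω = F (Y ω) := by
      intro X hX hmem
      have heq : P.map (fun ω => (X ω, Y ω)) = ν.map (fun y => (F y, y)) := hsub hmem hFS
      rw [ae_iff]
      have hshow : {ω | ¬ X ω = F (Y ω)} = (fun ω => (X ω, Y ω)) ⁻¹' {p : S1 × S2 | p.1 = F p.2}ᶜ :=
        rfl
      rw [hshow, ← Measure.map_apply (hX.prodMk hY) hset.compl, heq,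
        Measure.map_apply hmF2 hset.compl]
      have hempty : ((fun y => (F y, y)) ⁻¹' {p : S1 × S2 | p.1 = F p.2}ᶜ) = ∅ := by
        ext y; simp
      rw [hempty, measure_empty]
    filter_upwards [key X1 hX1 h1, key X2 hX2 h2] with ω ha hb
    rw [ha, hb]
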